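/- Fix λ > 0, p ∈ (0,1), a > 0, and set r_n = a·(p/(λ(1-p)))·(log n)/n and N = N(n) = ⌊n/p⌋. Define P_n = ∏_{j=N-n+1}^{N-1} (1 - e^{-λ r_n j}). Then: if a > 1, P_n → 1 as n → ∞; and if 0 < a < 1, P_n → 0 as n → ∞. -/

import Mathlib

open MeasureTheory ProbabilityTheory Real Filter Topology

private lemma aux_weier {ι : Type*} (s : Finset ι) (f : ι → ℝ)
    (h0 : ∀ i ∈ s, 0 ≤ f i) (h1 : ∀ i ∈ s, f i ≤ 1) :
    1 - ∑ i ∈ s, f i ≤ ∏ i ∈ s, (1 - f i) := by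
  classical
  induction s using Finset.cons_induction with
  | empty => simp
  | cons i s hi ih =>
    rw [Finset.prod_cons, Finset.sum_cons]
    have h0i := h0 i (Finset.mem_cons_self i s)
    have h1i := h1 i (Finset.mem_cons_self i s)
    have ih' := ih (fun j hj => h0 j (Finset.mem_cons_of_mem hj))
      (fun j hj => h1 j (Finset.mem_cons_of_mem hj))
    have hsum : 0 ≤ ∑ j ∈ s, f j :=
      Finset.sum_nonneg fun j hj => h0 j (Finset.mem_cons_of_mem hj)
    nlinarith

private lemma aux_prod_subset_le {s t : Finset ℕ} (f : ℕ → ℝ) (hst : s ⊆ t)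
    (h0 : ∀ i ∈ t, 0 ≤ f i) (h1 : ∀ i ∈ t, f i ≤ 1) :
    ∏ i ∈ t, f i ≤ ∏ i ∈ s, f i := by
  classical
  rw [← Finset.prod_sdiff hst]
  have h2 : ∏ i ∈ t \ s, f i ≤ 1 :=
    Finset.prod_le_one (fun i hi => h0 i (Finset.mem_sdiff.mp hi).1)
      (fun i hi => h1 i (Finset.mem_sdiff.mp hi).1)
  have h3 : 0 ≤ ∏ i ∈ s, f i := Finset.prod_nonneg fun i hi => h0 i (hst hi)
  exact mul_le_of_le_one_left h3 h2

/-- With `r_n = a (p/(λ(1-p))) (log n)/n`, `N = ⌊n/p⌋` and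
`P_n = ∏_{j=N-n+1}^{N-1} (1 - e^{-λ r_n j})` the connectivity probability of the
truncated graph `G*_n(λ, r_n)`: if `a > 1` then `P_n → 1`, and if `a < 1` then
`P_n → 0`. Hence `(p/(λ(1-p))) (log n)/n` is a strong threshold for connectivity. -/
theorem strong_threshold_connectivity_truncated
    (lam p a : ℝ) (hlam : 0 < lam) (hp : p ∈ Set.Ioo (0 : ℝ) 1) (ha : 0 < a)
    (r : ℕ → ℝ) (hr : ∀ n : ℕ, r n = a * (p / (lam * (1 - p))) * Real.log n / n)
    (N : ℕ → ℕ) (hN : ∀ n, N n = ⌊(n : ℝ) / p⌋₊)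
    (P : ℕ → ℝ) (hP : ∀ n : ℕ, P n =
      ∏ j ∈ Finset.Icc (N n - n + 1) (N n - 1), (1 - Real.exp (-(lam * r n * (j : ℝ))))) :
    (1 < a → Tendsto P atTop (𝓝 1)) ∧ (a < 1 → Tendsto P atTop (𝓝 0)) := by
  obtain ⟨hp0, hp1⟩ := hp
  have h1p : (0:ℝ) < 1 - p := by linarith
  set c : ℝ := p / (1 - p) with hc
  have hc0 : 0 < c := div_pos hp0 h1p
  have hX : lam * (a * (p / (lam * (1 - p)))) = a * c := by
    rw [hc]; field_simp
  have hlr : ∀ n : ℕ, lam * r n = a * c * Real.log n / n := by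
    intro n; rw [hr]
    calc lam * (a * (p / (lam * (1 - p))) * Real.log n / n)
        = lam * (a * (p / (lam * (1 - p)))) * Real.log n / n := by ring
      _ = a * c * Real.log n / n := by rw [hX]
  -- N n ≥ n
  have hNn : ∀ n : ℕ, n ≤ N n := by
    intro n; rw [hN]
    refine Nat.le_floor ?_
    rw [le_div_iff₀ hp0]
    nlinarith [Nat.cast_nonneg (α := ℝ) n]
  have hNub : ∀ n : ℕ, (N n : ℝ) ≤ n / p := by
    intro n; rw [hN]
    exact Nat.floor_le (div_nonneg (Nat.cast_nonneg n) hp0.le)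
  have hNlb : ∀ n : ℕ, (n : ℝ) / p - 1 < N n := by
    intro n; rw [hN]
    have := Nat.lt_floor_add_one ((n : ℝ) / p)
    linarith
  -- nonnegativity of log
  have hlog : ∀ n : ℕ, 0 ≤ Real.log n := fun n => Real.log_natCast_nonneg n
  have ht0 : ∀ n : ℕ, 0 ≤ lam * r n := by
    intro n
    rw [hlr]
    positivity
  -- every factor is in [0,1]
  have hfac0 : ∀ n : ℕ, ∀ j : ℕ, 0 ≤ 1 - Real.exp (-(lam * r n * (j : ℝ))) := by
    intro n j
    have : Real.exp (-(lam * r n * (j : ℝ))) ≤ 1 := by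
      rw [Real.exp_le_one_iff]
      have : 0 ≤ lam * r n * (j : ℝ) := mul_nonneg (ht0 n) (Nat.cast_nonneg j)
      linarith
    linarith
  have hfac1 : ∀ n : ℕ, ∀ j : ℕ, 1 - Real.exp (-(lam * r n * (j : ℝ))) ≤ 1 := by
    intro n j
    have := Real.exp_pos (-(lam * r n * (j : ℝ)))
    linarith
  have hP0 : ∀ n : ℕ, 0 ≤ P n := by
    intro n; rw [hP]
    exact Finset.prod_nonneg fun j _ => hfac0 n j
  have hP1 : ∀ n : ℕ, P n ≤ 1 := by
    intro n; rw [hP]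
    exact Finset.prod_le_one (fun j _ => hfac0 n j) (fun j _ => hfac1 n j)
  constructor
  · -- a > 1 : P → 1
    intro ha1
    -- lower bound : 1 - n^(1-a) ≤ P n for n ≥ 1
    have key : ∀ n : ℕ, 1 ≤ n → 1 - (n : ℝ) ^ ((1:ℝ) - a) ≤ P n := by
      intro n hn1
      have hn0 : (0:ℝ) < n := by exact_mod_cast hn1
      -- each exp term ≤ n^(-a)
      have hexp : ∀ j ∈ Finset.Icc (N n - n + 1) (N n - 1),
          Real.exp (-(lam * r n * (j : ℝ))) ≤ (n : ℝ) ^ (-a) := by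
        intro j hj
        have hjlb : (N n - n + 1 : ℕ) ≤ j := (Finset.mem_Icc.mp hj).1
        have hcast : ((N n - n + 1 : ℕ) : ℝ) = (N n : ℝ) - n + 1 := by
          push_cast [Nat.cast_sub (hNn n)]; ring
        have hjlb' : (N n : ℝ) - n + 1 ≤ (j : ℝ) := by
          rw [← hcast]; exact_mod_cast hjlb
        have hNlow : (n : ℝ) / c ≤ (N n : ℝ) - n + 1 := by
          have h := hNlb n
          have hdiv : (n:ℝ)/c = (n:ℝ)/p - n := by
            rw [hc, div_div_eq_mul_div]
            field_simp
          linarith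
        -- lam * r n * j ≥ a * log n
        have harg : a * Real.log n ≤ lam * r n * (j : ℝ) := by
          rw [hlr]
          have h1 : (n:ℝ)/c ≤ (j:ℝ) := le_trans hNlow hjlb'
          have h2 : a * c * Real.log n / n * ((n:ℝ)/c) ≤ a * c * Real.log n / n * j := by
            apply mul_le_mul_of_nonneg_left h1
            positivity
          have h3 : a * c * Real.log n / n * ((n:ℝ)/c) = a * Real.log n := by
            field_simp
          linarith
        calc Real.exp (-(lam * r n * (j : ℝ))) ≤ Real.exp (-(a * Real.log n)) :=
              Real.exp_le_exp.mpr (by linarith)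
          _ = (n : ℝ) ^ (-a) := by
              rw [Real.rpow_def_of_pos hn0]; ring_nf
      have hsum : ∑ j ∈ Finset.Icc (N n - n + 1) (N n - 1),
          Real.exp (-(lam * r n * (j : ℝ))) ≤ (n : ℝ) ^ ((1:ℝ) - a) := by
        calc ∑ j ∈ Finset.Icc (N n - n + 1) (N n - 1), Real.exp (-(lam * r n * (j : ℝ)))
            ≤ ∑ _j ∈ Finset.Icc (N n - n + 1) (N n - 1), (n : ℝ) ^ (-a) :=
              Finset.sum_le_sum hexp
          _ = ((Finset.Icc (N n - n + 1) (N n - 1)).card : ℝ) * (n : ℝ) ^ (-a) := by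
              rw [Finset.sum_const, nsmul_eq_mul]
          _ ≤ (n : ℝ) * (n : ℝ) ^ (-a) := by
              apply mul_le_mul_of_nonneg_right _ (Real.rpow_nonneg hn0.le _)
              have hcard : (Finset.Icc (N n - n + 1) (N n - 1)).card ≤ n := by
                rw [Nat.card_Icc]; omega
              exact_mod_cast hcard
          _ = (n : ℝ) ^ ((1:ℝ) - a) := by
              rw [show (1:ℝ) - a = 1 + (-a) by ring, Real.rpow_add hn0, Real.rpow_one]
      have hw := aux_weier (Finset.Icc (N n - n + 1) (N n - 1))
        (fun j => Real.exp (-(lam * r n * (j : ℝ))))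
        (fun j _ => (Real.exp_pos _).le)
        (fun j _ => by have := hfac0 n j; linarith)
      rw [hP]
      calc (1:ℝ) - (n : ℝ) ^ ((1:ℝ) - a)
          ≤ 1 - ∑ j ∈ Finset.Icc (N n - n + 1) (N n - 1),
              Real.exp (-(lam * r n * (j : ℝ))) := by linarith
        _ ≤ _ := hw
    -- squeeze
    have hlim : Tendsto (fun n : ℕ => 1 - (n : ℝ) ^ ((1:ℝ) - a)) atTop (𝓝 1) := by
      have h1 : Tendsto (fun n : ℕ => (n : ℝ) ^ ((1:ℝ) - a)) atTop (𝓝 0) := by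
        have h2 : Tendsto (fun n : ℕ => ((n:ℝ)) ^ (-(a - 1))) atTop (𝓝 0) :=
          (tendsto_rpow_neg_atTop (by linarith)).comp tendsto_natCast_atTop_atTop
        simpa [neg_sub] using h2
      have := (tendsto_const_nhds (x := (1:ℝ)) (f := atTop (α := ℕ))).sub h1
      simpa using this
    refine tendsto_of_tendsto_of_tendsto_of_le_of_le' hlim tendsto_const_nhds ?_ ?_
    · filter_upwards [eventually_ge_atTop 1] with n hn using key n hn
    · filter_upwards with n using hP1 n
  · -- a < 1 : P → 0
    intro ha1
    set b : ℝ := (1 + a) / 2 with hb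
    have hab : a < b := by rw [hb]; linarith
    have hb1 : b < 1 := by rw [hb]; linarith
    have hb0 : 0 < b := by rw [hb]; linarith
    set m : ℕ → ℕ := fun n => ⌊(n : ℝ) ^ b⌋₊ + 1 with hm
    have hmlb : ∀ n : ℕ, (n : ℝ) ^ b ≤ m n := by
      intro n
      have h := Nat.lt_floor_add_one ((n:ℝ)^b)
      have hcast : (m n : ℝ) = (⌊(n:ℝ)^b⌋₊ : ℝ) + 1 := by simp [hm]
      linarith
    have hmub : ∀ n : ℕ, (m n : ℝ) ≤ (n : ℝ) ^ b + 1 := by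
      intro n
      have : (⌊(n : ℝ) ^ b⌋₊ : ℝ) ≤ (n : ℝ) ^ b :=
        Nat.floor_le (Real.rpow_nonneg (Nat.cast_nonneg n) b)
      simp only [hm]; push_cast; linarith
    -- eventual facts
    have ev1 : ∀ᶠ n : ℕ in atTop, m n + 2 ≤ n := by
      have h1 : Tendsto (fun n : ℕ => (n : ℝ) ^ ((1:ℝ) - b)) atTop atTop :=
        (tendsto_rpow_atTop (by linarith)).comp tendsto_natCast_atTop_atTop
      filter_upwards [h1.eventually_ge_atTop 4, eventually_ge_atTop 1] with n h4 hn1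
      have hn0 : (0:ℝ) < n := by exact_mod_cast hn1
      have hnb1 : (1:ℝ) ≤ (n : ℝ) ^ b :=
        Real.one_le_rpow (by exact_mod_cast hn1) hb0.le
      have hsplit : (n : ℝ) = (n:ℝ) ^ b * (n:ℝ) ^ ((1:ℝ) - b) := by
        rw [← Real.rpow_add hn0]; norm_num
      have hfin : (m n : ℝ) + 2 ≤ (n : ℝ) := by
        have h5 : (n:ℝ) ^ b * 4 ≤ (n:ℝ) ^ b * (n:ℝ) ^ ((1:ℝ)-b) :=
          mul_le_mul_of_nonneg_left h4 (by positivity)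
        have h6 := hmub n
        nlinarith
      exact_mod_cast hfin
    have ev2 : ∀ᶠ n : ℕ in atTop,
        a * c * (m n : ℝ) * Real.log n / n ≤ Real.log 2 := by
      have h1 : Tendsto (fun n : ℕ => Real.log n / (n : ℝ) ^ ((1:ℝ) - b)) atTop (𝓝 0) := by
        have := (isLittleO_log_rpow_atTop (by linarith : (0:ℝ) < 1 - b)).tendsto_div_nhds_zero
        exact this.comp tendsto_natCast_atTop_atTop
      have h2 : Tendsto (fun n : ℕ => 2 * (a*c) * (Real.log n / (n : ℝ) ^ ((1:ℝ) - b)))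
          atTop (𝓝 0) := by
        simpa using h1.const_mul (2 * (a*c))
      filter_upwards [h2.eventually_le_const (by positivity : (0:ℝ) < Real.log 2),
        eventually_ge_atTop 1] with n hle hn1
      have hn0 : (0:ℝ) < n := by exact_mod_cast hn1
      have hnb1 : (1:ℝ) ≤ (n : ℝ) ^ b :=
        Real.one_le_rpow (by exact_mod_cast hn1) hb0.le
      have hm2 : (m n : ℝ) ≤ 2 * (n:ℝ) ^ b := by
        have := hmub n; linarith
      have hsplit : (n : ℝ) = (n:ℝ) ^ b * (n:ℝ) ^ ((1:ℝ) - b) := by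
        rw [← Real.rpow_add hn0]; norm_num
      have hnb'pos : (0:ℝ) < (n:ℝ) ^ ((1:ℝ)-b) := by positivity
      have e3 : (n:ℝ)^b = (n:ℝ) / (n:ℝ)^((1:ℝ)-b) := by
        rw [eq_div_iff hnb'pos.ne', ← Real.rpow_add hn0]
        rw [show b + (1 - b) = (1:ℝ) by ring, Real.rpow_one]
      have key : a * c * (m n : ℝ) * Real.log n / n
          ≤ 2 * (a*c) * (Real.log n / (n : ℝ) ^ ((1:ℝ) - b)) := by
        rw [div_le_iff₀ hn0]
        have e4 : 2 * (a*c) * (Real.log n / (n:ℝ)^((1:ℝ)-b)) * (n:ℝ)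
            = 2 * (a*c) * Real.log n * ((n:ℝ) / (n:ℝ)^((1:ℝ)-b)) := by ring
        rw [e4, ← e3]
        have e0 : a*c*(m n:ℝ) ≤ a*c*(2*(n:ℝ)^b) :=
          mul_le_mul_of_nonneg_left hm2 (by positivity)
        have e1 : a*c*(m n:ℝ)*Real.log n ≤ a*c*(2*(n:ℝ)^b)*Real.log n :=
          mul_le_mul_of_nonneg_right e0 (hlog n)
        linarith
      linarith
    -- upper bound eventual
    have key : ∀ᶠ n : ℕ in atTop, P n ≤ Real.exp (-((n:ℝ) ^ (b - a) / 2)) := by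
      filter_upwards [ev1, ev2, eventually_ge_atTop 1] with n hev1 hev2 hn1
      have hn0 : (0:ℝ) < n := by exact_mod_cast hn1
      have hm1 : 1 ≤ m n := by simp [hm]
      -- the truncated index set
      set S := Finset.Icc (N n - n + 1) (N n - n + m n) with hS
      have hsub : S ⊆ Finset.Icc (N n - n + 1) (N n - 1) := by
        apply Finset.Icc_subset_Icc_right
        have h1 : n ≤ N n := hNn n
        have h2 : m n + 2 ≤ n := hev1
        omega
      have hPle : P n ≤ ∏ j ∈ S, (1 - Real.exp (-(lam * r n * (j : ℝ)))) := by
        rw [hP]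
        exact aux_prod_subset_le _ hsub (fun j _ => hfac0 n j) (fun j _ => hfac1 n j)
      -- each factor in S is ≤ 1 - n^(-a)/2
      have hfacS : ∀ j ∈ S, (1 - Real.exp (-(lam * r n * (j : ℝ))))
          ≤ 1 - (n : ℝ) ^ (-a) / 2 := by
        intro j hj
        have hjub : j ≤ N n - n + m n := (Finset.mem_Icc.mp hj).2
        have hcast : ((N n - n + m n : ℕ) : ℝ) = (N n : ℝ) - n + m n := by
          push_cast [Nat.cast_sub (hNn n)]; ring
        have hjub' : (j : ℝ) ≤ (N n : ℝ) - n + m n := by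
          rw [← hcast]; exact_mod_cast hjub
        have hNhigh : (N n : ℝ) - n ≤ n / c := by
          have := hNub n
          have hdiv : (n:ℝ)/c = (n:ℝ)/p - n := by
            rw [hc]; field_simp
          linarith
        have harg : lam * r n * (j : ℝ) ≤ a * Real.log n + Real.log 2 := by
          rw [hlr]
          have h1 : (j:ℝ) ≤ (n:ℝ)/c + m n := by linarith
          have h2 : a * c * Real.log n / n * j ≤ a * c * Real.log n / n * ((n:ℝ)/c + m n) := by
            apply mul_le_mul_of_nonneg_left h1
            positivity
          have h3 : a * c * Real.log n / n * ((n:ℝ)/c + m n)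
              = a * Real.log n + a * c * (m n : ℝ) * Real.log n / n := by
            field_simp
          linarith [hev2]
        have hexp : (n : ℝ) ^ (-a) / 2 ≤ Real.exp (-(lam * r n * (j : ℝ))) := by
          have h1 : Real.exp (-(a * Real.log n + Real.log 2))
              ≤ Real.exp (-(lam * r n * (j : ℝ))) :=
            Real.exp_le_exp.mpr (by linarith)
          have h2 : Real.exp (-(a * Real.log n + Real.log 2))
              = (n : ℝ) ^ (-a) / 2 := by
            rw [neg_add, Real.exp_add, Real.exp_neg (Real.log 2),
              Real.exp_log (by norm_num : (0:ℝ) < 2), Real.rpow_def_of_pos hn0]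
            ring_nf
          linarith
        linarith
      have hcardS : S.card = m n := by
        rw [hS, Nat.card_Icc]
        have := hNn n
        omega
      have hbase0 : (0:ℝ) ≤ 1 - (n : ℝ) ^ (-a) / 2 := by
        have : (n:ℝ) ^ (-a) ≤ 1 := by
          apply Real.rpow_le_one_of_one_le_of_nonpos (by exact_mod_cast hn1) (by linarith)
        linarith
      have hprodS : ∏ j ∈ S, (1 - Real.exp (-(lam * r n * (j : ℝ))))
          ≤ (1 - (n : ℝ) ^ (-a) / 2) ^ m n := by
        rw [← hcardS, ← Finset.prod_const]
        exact Finset.prod_le_prod (fun j _ => hfac0 n j) hfacS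
      have hexpbound : (1 - (n : ℝ) ^ (-a) / 2) ^ m n
          ≤ Real.exp (-((n:ℝ) ^ (b - a) / 2)) := by
        have h1 : 1 - (n : ℝ) ^ (-a) / 2 ≤ Real.exp (-((n : ℝ) ^ (-a) / 2)) := by
          have := Real.add_one_le_exp (-((n : ℝ) ^ (-a) / 2))
          linarith
        have h2 : (1 - (n : ℝ) ^ (-a) / 2) ^ m n
            ≤ Real.exp (-((n : ℝ) ^ (-a) / 2)) ^ m n :=
          pow_le_pow_left₀ hbase0 h1 (m n)
        have h3 : Real.exp (-((n : ℝ) ^ (-a) / 2)) ^ m n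
            = Real.exp ((m n : ℝ) * (-((n : ℝ) ^ (-a) / 2))) := by
          rw [← Real.exp_nat_mul]
        have h4 : Real.exp ((m n : ℝ) * (-((n : ℝ) ^ (-a) / 2)))
            ≤ Real.exp (-((n:ℝ) ^ (b - a) / 2)) := by
          apply Real.exp_le_exp.mpr
          have h5 : (n:ℝ) ^ b * (n : ℝ) ^ (-a) ≤ (m n : ℝ) * (n : ℝ) ^ (-a) :=
            mul_le_mul_of_nonneg_right (hmlb n) (Real.rpow_nonneg hn0.le _)
          have h6 : (n:ℝ) ^ b * (n : ℝ) ^ (-a) = (n:ℝ) ^ (b - a) := by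
            rw [← Real.rpow_add hn0]; ring_nf
          linarith
        calc (1 - (n : ℝ) ^ (-a) / 2) ^ m n
            ≤ Real.exp (-((n : ℝ) ^ (-a) / 2)) ^ m n := h2
          _ = Real.exp ((m n : ℝ) * (-((n : ℝ) ^ (-a) / 2))) := h3
          _ ≤ Real.exp (-((n:ℝ) ^ (b - a) / 2)) := h4
      linarith
    -- squeeze to 0
    have hlim : Tendsto (fun n : ℕ => Real.exp (-((n:ℝ) ^ (b - a) / 2))) atTop (𝓝 0) := by
      have h1 : Tendsto (fun n : ℕ => (n : ℝ) ^ (b - a) / 2) atTop atTop := by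
        apply Tendsto.atTop_div_const (by norm_num : (0:ℝ) < 2)
        exact (tendsto_rpow_atTop (by linarith)).comp tendsto_natCast_atTop_atTop
      exact Real.tendsto_exp_neg_atTop_nhds_zero.comp h1
    refine tendsto_of_tendsto_of_tendsto_of_le_of_le' tendsto_const_nhds hlim ?_ ?_
    · filter_upwards with n using hP0 n
    · exact key
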